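/- For every integer J ≥ 2 and every θ > 0, the Mallows variance expression is strictly positive: J e^{−θ}/(1 − e^{−θ})² − Σ_{j=1}^J j² e^{−jθ}/(1 − e^{−jθ})² > 0. -/

import Mathlib

open Real

lemma sinh_nat_mul_le (t : ℝ) (ht : 0 < t) :
    ∀ n : ℕ, 1 ≤ n → (n : ℝ) * Real.sinh t ≤ Real.sinh ((n : ℝ) * t) := by
  intro n hn
  induction n with
  | zero => omega
  | succ m ih =>
    rcases Nat.eq_or_lt_of_le hn with h | h
    · simp [← h]
    · have hm : 1 ≤ m := by omega
      have ihm := ih hm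
      have h1 : Real.sinh ((↑(m + 1) : ℝ) * t) = Real.sinh ((m : ℝ) * t + t) := by
        push_cast; ring_nf
      rw [h1, Real.sinh_add]
      have hc1 : (1 : ℝ) ≤ Real.cosh t := Real.one_le_cosh t
      have hc2 : (1 : ℝ) ≤ Real.cosh ((m : ℝ) * t) := Real.one_le_cosh _
      have hs1 : 0 < Real.sinh t := Real.sinh_pos_iff.mpr ht
      have hmpos : (0:ℝ) < (m:ℝ) := by exact_mod_cast hm
      have hs2 : 0 < Real.sinh ((m : ℝ) * t) := Real.sinh_pos_iff.mpr (by positivity)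
      have A : 0 ≤ Real.sinh ((m : ℝ) * t) * (Real.cosh t - 1) :=
        mul_nonneg hs2.le (by linarith)
      have B : 0 ≤ (Real.cosh ((m : ℝ) * t) - 1) * Real.sinh t :=
        mul_nonneg (by linarith) hs1.le
      push_cast
      nlinarith

lemma sinh_nat_mul_lt (t : ℝ) (ht : 0 < t) (n : ℕ) (hn : 2 ≤ n) :
    (n : ℝ) * Real.sinh t < Real.sinh ((n : ℝ) * t) := by
  have hm : 1 ≤ n - 1 := by omega
  have ihm := sinh_nat_mul_le t ht (n - 1) hm
  have hcast : (↑(n - 1) : ℝ) = (n : ℝ) - 1 := by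
    have h1n : (1:ℕ) ≤ n := by omega
    push_cast [Nat.cast_sub h1n]; ring
  rw [hcast] at ihm
  have h1 : Real.sinh ((n : ℝ) * t) = Real.sinh (((n : ℝ) - 1) * t + t) := by
    congr 1; ring
  rw [h1, Real.sinh_add]
  have hc1 : (1 : ℝ) < Real.cosh t := Real.one_lt_cosh.mpr (ne_of_gt ht)
  have hc2 : (1 : ℝ) ≤ Real.cosh (((n : ℝ) - 1) * t) := Real.one_le_cosh _
  have hs1 : 0 < Real.sinh t := Real.sinh_pos_iff.mpr ht
  have hnpos : (0:ℝ) < (n:ℝ) - 1 := by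
    have : (2:ℝ) ≤ (n:ℝ) := by exact_mod_cast hn
    linarith
  have hs2 : 0 < Real.sinh (((n : ℝ) - 1) * t) := Real.sinh_pos_iff.mpr (by positivity)
  have A : 0 < Real.sinh (((n : ℝ) - 1) * t) * (Real.cosh t - 1) :=
    mul_pos hs2 (by linarith)
  have B : 0 ≤ (Real.cosh (((n : ℝ) - 1) * t) - 1) * Real.sinh t :=
    mul_nonneg (by linarith) hs1.le
  nlinarith

lemma exp_div_eq_sinh (x : ℝ) (hx : 0 < x) :
    Real.exp (-x) / (1 - Real.exp (-x)) ^ 2 = 1 / (4 * Real.sinh (x / 2) ^ 2) := by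
  have hs : Real.sinh (x / 2) = (Real.exp (x / 2) - Real.exp (-(x / 2))) / 2 :=
    Real.sinh_eq _
  set u := Real.exp (x / 2) with hu
  set v := Real.exp (-(x / 2)) with hv
  have huv : u * v = 1 := by rw [hu, hv, ← Real.exp_add]; simp
  have hv2 : v * v = Real.exp (-x) := by rw [hv, ← Real.exp_add]; ring_nf
  have hlt : Real.exp (-x) < 1 := Real.exp_lt_one_iff.mpr (by linarith)
  have hne : (1 - Real.exp (-x)) ≠ 0 := by linarith [Real.exp_pos (-x)]
  have hspos : 0 < Real.sinh (x / 2) := Real.sinh_pos_iff.mpr (by linarith)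
  have key : Real.exp (-x) * (4 * Real.sinh (x / 2) ^ 2) = (1 - Real.exp (-x)) ^ 2 := by
    rw [hs, ← hv2]
    ring_nf
    linear_combination (u * v + 1 - 2 * v ^ 2) * huv
  have h2 : (4 * Real.sinh (x / 2) ^ 2) ≠ 0 := by positivity
  field_simp
  linarith [key]

lemma term_le (θ : ℝ) (hθ : 0 < θ) (j : ℕ) (hj : 1 ≤ j) :
    (j : ℝ) ^ 2 * Real.exp (-(j : ℝ) * θ) / (1 - Real.exp (-(j : ℝ) * θ)) ^ 2 ≤
      Real.exp (-θ) / (1 - Real.exp (-θ)) ^ 2 := by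
  have hjpos : (0:ℝ) < (j:ℝ) := by exact_mod_cast hj
  have hx : 0 < (j:ℝ) * θ := by positivity
  have e1 := exp_div_eq_sinh θ hθ
  have e2 := exp_div_eq_sinh ((j:ℝ) * θ) hx
  have harg : ((j:ℝ) * θ) / 2 = (j:ℝ) * (θ / 2) := by ring
  rw [harg] at e2
  have hsinh := sinh_nat_mul_le (θ/2) (by linarith) j hj
  have hs1 : 0 < Real.sinh (θ/2) := Real.sinh_pos_iff.mpr (by linarith)
  have hs2 : 0 < Real.sinh ((j:ℝ) * (θ/2)) := Real.sinh_pos_iff.mpr (by positivity)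
  have hsq : ((j:ℝ) * Real.sinh (θ/2)) * ((j:ℝ) * Real.sinh (θ/2)) ≤
      Real.sinh ((j:ℝ) * (θ/2)) * Real.sinh ((j:ℝ) * (θ/2)) :=
    mul_self_le_mul_self (by positivity) hsinh
  have key : (j:ℝ)^2 * (1 / (4 * Real.sinh ((j:ℝ) * (θ/2)) ^ 2)) ≤
      1 / (4 * Real.sinh (θ/2) ^ 2) := by
    rw [mul_one_div, div_le_div_iff₀ (by positivity) (by positivity)]
    nlinarith
  calc (j : ℝ) ^ 2 * Real.exp (-(j : ℝ) * θ) / (1 - Real.exp (-(j : ℝ) * θ)) ^ 2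
      = (j:ℝ)^2 * (Real.exp (-((j:ℝ) * θ)) / (1 - Real.exp (-((j:ℝ) * θ))) ^ 2) := by
        rw [neg_mul]; ring
    _ = (j:ℝ)^2 * (1 / (4 * Real.sinh ((j:ℝ) * (θ/2)) ^ 2)) := by rw [e2]
    _ ≤ 1 / (4 * Real.sinh (θ/2) ^ 2) := key
    _ = Real.exp (-θ) / (1 - Real.exp (-θ)) ^ 2 := e1.symm

lemma term_lt (θ : ℝ) (hθ : 0 < θ) (j : ℕ) (hj : 2 ≤ j) :
    (j : ℝ) ^ 2 * Real.exp (-(j : ℝ) * θ) / (1 - Real.exp (-(j : ℝ) * θ)) ^ 2 <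
      Real.exp (-θ) / (1 - Real.exp (-θ)) ^ 2 := by
  have hjpos : (0:ℝ) < (j:ℝ) := by exact_mod_cast (by omega : 0 < j)
  have hx : 0 < (j:ℝ) * θ := by positivity
  have e1 := exp_div_eq_sinh θ hθ
  have e2 := exp_div_eq_sinh ((j:ℝ) * θ) hx
  have harg : ((j:ℝ) * θ) / 2 = (j:ℝ) * (θ / 2) := by ring
  rw [harg] at e2
  have hsinh := sinh_nat_mul_lt (θ/2) (by linarith) j hj
  have hs1 : 0 < Real.sinh (θ/2) := Real.sinh_pos_iff.mpr (by linarith)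
  have hs2 : 0 < Real.sinh ((j:ℝ) * (θ/2)) := Real.sinh_pos_iff.mpr (by positivity)
  have hsq : ((j:ℝ) * Real.sinh (θ/2)) * ((j:ℝ) * Real.sinh (θ/2)) <
      Real.sinh ((j:ℝ) * (θ/2)) * Real.sinh ((j:ℝ) * (θ/2)) :=
    mul_self_lt_mul_self (by positivity) hsinh
  have key : (j:ℝ)^2 * (1 / (4 * Real.sinh ((j:ℝ) * (θ/2)) ^ 2)) <
      1 / (4 * Real.sinh (θ/2) ^ 2) := by
    rw [mul_one_div, div_lt_div_iff₀ (by positivity) (by positivity)]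
    nlinarith
  calc (j : ℝ) ^ 2 * Real.exp (-(j : ℝ) * θ) / (1 - Real.exp (-(j : ℝ) * θ)) ^ 2
      = (j:ℝ)^2 * (Real.exp (-((j:ℝ) * θ)) / (1 - Real.exp (-((j:ℝ) * θ))) ^ 2) := by
        rw [neg_mul]; ring
    _ = (j:ℝ)^2 * (1 / (4 * Real.sinh ((j:ℝ) * (θ/2)) ^ 2)) := by rw [e2]
    _ < 1 / (4 * Real.sinh (θ/2) ^ 2) := key
    _ = Real.exp (-θ) / (1 - Real.exp (-θ)) ^ 2 := e1.symm

theorem mallows_variance_pos (J : ℕ) (hJ : 2 ≤ J) (θ : ℝ) (hθ : 0 < θ) :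
    0 < (J : ℝ) * Real.exp (-θ) / (1 - Real.exp (-θ)) ^ 2 -
      ∑ j ∈ Finset.Icc 1 J,
        (j : ℝ) ^ 2 * Real.exp (-(j : ℝ) * θ) / (1 - Real.exp (-(j : ℝ) * θ)) ^ 2 := by
  have hsum : ∑ j ∈ Finset.Icc 1 J,
      (j : ℝ) ^ 2 * Real.exp (-(j : ℝ) * θ) / (1 - Real.exp (-(j : ℝ) * θ)) ^ 2 <
      ∑ _j ∈ Finset.Icc 1 J, Real.exp (-θ) / (1 - Real.exp (-θ)) ^ 2 := by
    apply Finset.sum_lt_sum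
    · intro i hi
      exact term_le θ hθ i (Finset.mem_Icc.mp hi).1
    · exact ⟨2, Finset.mem_Icc.mpr ⟨by omega, hJ⟩, term_lt θ hθ 2 le_rfl⟩
  have hcard : (Finset.Icc 1 J).card = J := by
    rw [Nat.card_Icc]; omega
  rw [Finset.sum_const, hcard, nsmul_eq_mul] at hsum
  have : (J : ℝ) * Real.exp (-θ) / (1 - Real.exp (-θ)) ^ 2
      = (J : ℝ) * (Real.exp (-θ) / (1 - Real.exp (-θ)) ^ 2) := by ring
  rw [this]
  linarith
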